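/- For the scalar compound dirty paper channel (M_s = M_t = M_r = 1), the upper bound specializes to C̄₁ = (κ/2)·[log((h²P + 1 + a_max²·q_s)/(a_max²·q_s)) + log(1 + h²P)], and the gap between C̄₁ and (κ/2)·log(1+h²P) is at most (κ/2)·log(1 + (h²P+1)/(a_max²·q_s)); in particular the gap tends to 0 as a_max → ∞. -/

import Mathlib

open Filter

lemma gap_eq (h P qs : ℝ) (hqs : 0 < qs) (a : ℝ) (ha : 0 < a) :
    (h ^ 2 * P + 1 + a ^ 2 * qs) / (a ^ 2 * qs)
      = 1 + (h ^ 2 * P + 1) / (a ^ 2 * qs) := by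
  have haq : a ^ 2 * qs ≠ 0 := by positivity
  field_simp
  ring

/-- Scalar compound dirty paper channel: the gap between the specialized upper
bound `C̄₁ = (κ/2)[log₂((h²P+1+a²q)/(a²q)) + log₂(1+h²P)]` and the prelog
approximation `(κ/2)·log₂(1+h²P)` is at most
`(κ/2)·log₂(1 + (h²P+1)/(a²q))`, and it tends to `0` as `a_max → ∞`. -/
theorem scalar_bound_gap (h P qs κ : ℝ) (hP : 0 < P) (hqs : 0 < qs)
    (hκ : κ = 1 / 2 ∨ κ = 1) :
    (∀ a : ℝ, 0 < a →
      (κ / 2) * (Real.logb 2 ((h ^ 2 * P + 1 + a ^ 2 * qs) / (a ^ 2 * qs))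
          + Real.logb 2 (1 + h ^ 2 * P))
        - (κ / 2) * Real.logb 2 (1 + h ^ 2 * P)
        ≤ (κ / 2) * Real.logb 2 (1 + (h ^ 2 * P + 1) / (a ^ 2 * qs))) ∧
    Tendsto (fun a : ℝ =>
        (κ / 2) * (Real.logb 2 ((h ^ 2 * P + 1 + a ^ 2 * qs) / (a ^ 2 * qs))
            + Real.logb 2 (1 + h ^ 2 * P))
          - (κ / 2) * Real.logb 2 (1 + h ^ 2 * P))
      atTop (nhds 0) := by
  constructor
  · intro a ha
    rw [gap_eq h P qs hqs a ha]
    exact le_of_eq (by ring)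
  · have hX : (0:ℝ) < h ^ 2 * P + 1 := by positivity
    have h1 : Tendsto (fun a : ℝ => 1 + (h ^ 2 * P + 1) / (a ^ 2 * qs))
        atTop (nhds 1) := by
      have : Tendsto (fun a : ℝ => (h ^ 2 * P + 1) / (a ^ 2 * qs)) atTop (nhds 0) := by
        apply Tendsto.div_atTop tendsto_const_nhds
        exact Tendsto.atTop_mul_const hqs (tendsto_pow_atTop two_ne_zero)
      simpa using tendsto_const_nhds.add this
    have h2 : Tendsto (fun a : ℝ =>
        Real.logb 2 (1 + (h ^ 2 * P + 1) / (a ^ 2 * qs))) atTop (nhds 0) := by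
      have := (((Real.continuousAt_logb (b := 2) (x := 1) (by norm_num)).tendsto)).comp h1
      simpa [Function.comp_def] using this
    have h3 : Tendsto (fun a : ℝ =>
        (κ / 2) * Real.logb 2 (1 + (h ^ 2 * P + 1) / (a ^ 2 * qs))) atTop (nhds 0) := by
      simpa using h2.const_mul (κ / 2)
    apply h3.congr'
    filter_upwards [eventually_gt_atTop 0] with a ha
    rw [gap_eq h P qs hqs a ha]
    ring
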